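/- Let λ be a strict partition with parts in {1,...,n-1} having 1 as a part, and let μ be λ with the part 1 removed. Then g_λ · g_{μ'} / (g_{λ'} · g_μ) = n(n-1)/2, with notation as in Schur's formula and complements taken in {1,...,n-1}. -/

import Mathlib

open Finset


/-- Schur's expression `g_ν = (∏_i ν_i!) ∏_{i<j}(ν_i+ν_j) / ∏_{i<j}(ν_i-ν_j)`
for a strict partition `ν` regarded as a finite set of distinct positive integers. -/
def gSchur (nu : Finset ℕ) : ℚ :=
  (∏ a ∈ nu, (Nat.factorial a : ℚ)) *
    ∏ p ∈ nu.offDiag.filter (fun p => p.2 < p.1),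
      (((p.1 : ℚ) + (p.2 : ℚ)) / ((p.1 : ℚ) - (p.2 : ℚ)))

/-- The complement of a strict partition with parts in `{1, …, n-1}`. -/
def strictComplement (n : ℕ) (lam : Finset ℕ) : Finset ℕ :=
  Finset.Icc 1 (n - 1) \ lam

lemma gSchur_aux_ne_zero {S : Finset ℕ} (hS : ∀ a ∈ S, 1 ≤ a) : gSchur S ≠ 0 := by
  unfold gSchur
  apply mul_ne_zero
  · exact Finset.prod_ne_zero_iff.2 fun a _ =>
      Nat.cast_ne_zero.2 (Nat.factorial_ne_zero a)
  · refine Finset.prod_ne_zero_iff.2 fun p hp => ?_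
    simp only [Finset.mem_filter, Finset.mem_offDiag] at hp
    obtain ⟨⟨ha, hb, hne⟩, hlt⟩ := hp
    have h1 := hS _ ha
    have h2 := hS _ hb
    apply div_ne_zero
    · have : (0:ℚ) < (p.1 : ℚ) + (p.2 : ℚ) := by
        have : (1:ℚ) ≤ (p.1 : ℚ) := by exact_mod_cast h1
        have : (1:ℚ) ≤ (p.2 : ℚ) := by exact_mod_cast h2
        linarith [(by exact_mod_cast h1 : (1:ℚ) ≤ (p.1 : ℚ))]
      exact ne_of_gt this
    · have : (p.2 : ℚ) < (p.1 : ℚ) := by exact_mod_cast hlt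
      intro h
      rw [sub_eq_zero] at h
      exact absurd h (ne_of_gt this)

lemma gSchur_insert_one {S : Finset ℕ} (hS : ∀ a ∈ S, 2 ≤ a) :
    gSchur (insert 1 S) = gSchur S * ∏ a ∈ S, ((a:ℚ)+1)/((a:ℚ)-1) := by
  have h1 : (1:ℕ) ∉ S := fun h => by have := hS 1 h; omega
  unfold gSchur
  rw [Finset.prod_insert h1]
  rw [Finset.offDiag_insert (a := 1) h1, Finset.filter_union, Finset.filter_union]
  have hE3 : ({1} ×ˢ S).filter (fun p : ℕ × ℕ => p.2 < p.1) = ∅ := by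
    ext p
    simp only [Finset.mem_filter, Finset.mem_product, Finset.mem_singleton,
      Finset.notMem_empty, iff_false]
    rintro ⟨⟨hp1, hp2⟩, hlt⟩
    have := hS _ hp2
    omega
  have hE2 : (S ×ˢ {1}).filter (fun p : ℕ × ℕ => p.2 < p.1) = S ×ˢ {1} := by
    apply Finset.filter_true_of_mem
    intro p hp
    simp only [Finset.mem_product, Finset.mem_singleton] at hp
    have := hS _ hp.1
    omega
  rw [hE3, hE2, Finset.union_empty]
  have hdisj : Disjoint (S.offDiag.filter (fun p : ℕ × ℕ => p.2 < p.1)) (S ×ˢ {1}) := by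
    rw [Finset.disjoint_left]
    intro p hp hq
    simp only [Finset.mem_filter, Finset.mem_offDiag] at hp
    simp only [Finset.mem_product, Finset.mem_singleton] at hq
    have := hS _ hp.1.2.1
    omega
  rw [Finset.prod_union hdisj, Finset.prod_product]
  simp only [Finset.prod_singleton]
  push_cast
  simp [Nat.factorial]
  ring

lemma telescope_prod : ∀ m : ℕ, 1 ≤ m →
    ∏ a ∈ Finset.Icc 2 m, (((a:ℚ)+1)/((a:ℚ)-1)) = ((m:ℚ)+1)*(m:ℚ)/2 := by
  intro m hm
  induction m with
  | zero => omega
  | succ k ih =>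
    rcases Nat.eq_or_lt_of_le hm with h | h
    · have : k = 0 := by omega
      subst this
      norm_num
    · have hk : 1 ≤ k := by omega
      rw [show k + 1 = k + 1 from rfl, Finset.prod_Icc_succ_top (by omega : 2 ≤ k + 1),
        ih hk]
      have hk0 : ((k:ℚ)) ≠ 0 := by positivity
      push_cast
      field_simp
      ring
      exact mul_inv_cancel₀ hk0

/-- If `λ` is a strict partition with parts in `{1, …, n-1}` having `1` as a part
and `μ` is `λ` with the part `1` removed, then `g_λ g_{μ'} / (g_{λ'} g_μ) = n(n-1)/2`. -/
theorem gSchur_ratio_remove_one (n : ℕ) (lam mu : Finset ℕ)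
    (hlam : lam ⊆ Finset.Icc 1 (n - 1)) (h1 : 1 ∈ lam)
    (hmueq : mu = lam.erase 1) :
    gSchur lam * gSchur (strictComplement n mu) /
        (gSchur (strictComplement n lam) * gSchur mu)
      = (n : ℚ) * ((n : ℚ) - 1) / 2 := by
  have hn2 : 2 ≤ n := by
    have := hlam h1
    simp only [Finset.mem_Icc] at this
    omega
  have hmu2 : ∀ a ∈ mu, 2 ≤ a := by
    intro a ha
    rw [hmueq, Finset.mem_erase] at ha
    have := hlam ha.2
    simp only [Finset.mem_Icc] at this
    omega
  have hc2 : ∀ a ∈ strictComplement n lam, 2 ≤ a := by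
    intro a ha
    simp only [strictComplement, Finset.mem_sdiff, Finset.mem_Icc] at ha
    have : a ≠ 1 := fun h => ha.2 (h ▸ h1)
    omega
  have hlameq : lam = insert 1 mu := by
    rw [hmueq]; exact (Finset.insert_erase h1).symm
  have hcompeq : strictComplement n mu = insert 1 (strictComplement n lam) := by
    ext a
    simp only [strictComplement, hmueq, Finset.mem_sdiff, Finset.mem_Icc,
      Finset.mem_insert, Finset.mem_erase]
    constructor
    · rintro ⟨⟨ha1, ha2⟩, hna⟩
      by_cases h : a = 1
      · exact Or.inl h
      · exact Or.inr ⟨⟨ha1, ha2⟩, fun hl => hna ⟨h, hl⟩⟩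
    · rintro (h | ⟨⟨ha1, ha2⟩, hna⟩)
      · subst h
        exact ⟨⟨le_refl 1, by omega⟩, fun hh => hh.1 rfl⟩
      · exact ⟨⟨ha1, ha2⟩, fun hh => hna hh.2⟩
  have hg1 : gSchur mu ≠ 0 := gSchur_aux_ne_zero (fun a ha => by have := hmu2 a ha; omega)
  have hg2 : gSchur (strictComplement n lam) ≠ 0 :=
    gSchur_aux_ne_zero (fun a ha => by have := hc2 a ha; omega)
  have hglam : gSchur lam = gSchur mu * ∏ a ∈ mu, ((a:ℚ)+1)/((a:ℚ)-1) := by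
    rw [hlameq, gSchur_insert_one hmu2]
  have hgcomp : gSchur (strictComplement n mu)
      = gSchur (strictComplement n lam) *
        ∏ a ∈ strictComplement n lam, ((a:ℚ)+1)/((a:ℚ)-1) := by
    rw [hcompeq, gSchur_insert_one hc2]
  rw [hglam, hgcomp]
  have hdisj : Disjoint mu (strictComplement n lam) := by
    rw [Finset.disjoint_left]
    intro a ha hb
    simp only [strictComplement, Finset.mem_sdiff] at hb
    exact hb.2 (by rw [hmueq] at ha; exact Finset.mem_of_mem_erase ha)
  have hunion : mu ∪ strictComplement n lam = Finset.Icc 2 (n - 1) := by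
    ext a
    simp only [Finset.mem_union, hmueq, strictComplement, Finset.mem_erase,
      Finset.mem_sdiff, Finset.mem_Icc]
    constructor
    · rintro (⟨hne, hal⟩ | ⟨⟨ha1, ha2⟩, _⟩)
      · have := hlam hal
        simp only [Finset.mem_Icc] at this
        omega
      · have : a ≠ 1 := fun h => by
          subst h
          exact ‹1 ∉ lam› h1
        omega
    · rintro ⟨ha1, ha2⟩
      by_cases h : a ∈ lam
      · exact Or.inl ⟨by omega, h⟩
      · exact Or.inr ⟨⟨by omega, ha2⟩, h⟩
  have key : (gSchur mu * ∏ a ∈ mu, ((a:ℚ)+1)/((a:ℚ)-1)) *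
      (gSchur (strictComplement n lam) * ∏ a ∈ strictComplement n lam, ((a:ℚ)+1)/((a:ℚ)-1)) /
      (gSchur (strictComplement n lam) * gSchur mu)
      = (∏ a ∈ mu, ((a:ℚ)+1)/((a:ℚ)-1)) *
        ∏ a ∈ strictComplement n lam, ((a:ℚ)+1)/((a:ℚ)-1) := by
    rw [div_eq_iff (mul_ne_zero hg2 hg1)]
    ring
  rw [key, ← Finset.prod_union hdisj, hunion,
    telescope_prod (n - 1) (by omega)]
  have : ((n - 1 : ℕ) : ℚ) = (n : ℚ) - 1 := by
    push_cast [Nat.cast_sub (by omega : 1 ≤ n)]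
    ring
  rw [this]
  ring
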